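/- Let b : ℝ → ℝ be continuous on [0,T] and differentiable on (0,T) with b(0) > 0, and suppose b(t₀) < 0 for some t₀ ∈ (0,T]. Then there exists t₁ ∈ (0, t₀) with b(t₁) = 0 and b'(t₁) ≤ 0; consequently if γ > 0 and b'(t) + γ·b(t) > 0 whenever b(t) = 0, the trajectory can never leave the safe set {b ≥ 0}. -/

import Mathlib

open Set

theorem barrier_boundary_crossing (b : ℝ → ℝ) (T : ℝ) (hT : 0 < T)
    (hcont : ContinuousOn b (Set.Icc 0 T))
    (hdiff : ∀ t ∈ Set.Ioo 0 T, DifferentiableAt ℝ b t)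
    (h0 : b 0 > 0) :
    (∀ t₀ ∈ Set.Ioc 0 T, b t₀ < 0 →
        ∃ t₁ ∈ Set.Ioo 0 t₀, b t₁ = 0 ∧ deriv b t₁ ≤ 0) ∧
      (∀ γ : ℝ, 0 < γ →
        (∀ t ∈ Set.Ioo 0 T, b t = 0 → deriv b t + γ * b t > 0) →
        ∀ t ∈ Set.Icc 0 T, 0 ≤ b t) := by
  have main : ∀ t₀ ∈ Set.Ioc 0 T, b t₀ < 0 →
      ∃ t₁ ∈ Set.Ioo 0 t₀, b t₁ = 0 ∧ deriv b t₁ ≤ 0 := by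
    intro t₀ ht₀ hbt₀
    obtain ⟨ht₀0, ht₀T⟩ := ht₀
    have hsub : Icc 0 t₀ ⊆ Icc 0 T := Icc_subset_Icc le_rfl ht₀T
    have hcont' : ContinuousOn b (Icc 0 t₀) := hcont.mono hsub
    set S : Set ℝ := Icc 0 t₀ ∩ b ⁻¹' {0} with hS
    have hSclosed : IsClosed S :=
      hcont'.preimage_isClosed_of_isClosed isClosed_Icc isClosed_singleton
    have hScomp : IsCompact S :=
      isCompact_Icc.of_isClosed_subset hSclosed inter_subset_left
    have hSne : S.Nonempty := by
      have h01 : (0 : ℝ) ∈ Icc (b t₀) (b 0) := ⟨hbt₀.le, h0.le⟩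
      obtain ⟨c, hc, hbc⟩ := intermediate_value_Icc' ht₀0.le hcont' h01
      exact ⟨c, hc, hbc⟩
    set t₁ : ℝ := sSup S with ht₁def
    have ht₁S : t₁ ∈ S := hScomp.sSup_mem hSne
    obtain ⟨⟨ht₁0, ht₁t₀⟩, hbt₁⟩ := ht₁S
    simp only [mem_preimage, mem_singleton_iff] at hbt₁
    have ht₁0' : 0 < t₁ := by
      rcases ht₁0.lt_or_eq with h | h
      · exact h
      · exfalso; rw [← h] at hbt₁; linarith
    have ht₁t₀' : t₁ < t₀ := by
      rcases ht₁t₀.lt_or_eq with h | h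
      · exact h
      · exfalso; rw [h] at hbt₁; linarith
    -- b is negative on (t₁, t₀]
    have hneg : ∀ t ∈ Ioc t₁ t₀, b t < 0 := by
      intro t ⟨htl, htr⟩
      by_contra h
      push_neg at h
      have hcont'' : ContinuousOn b (Icc t t₀) :=
        hcont'.mono (Icc_subset_Icc (ht₁0'.le.trans htl.le) le_rfl)
      have h01 : (0 : ℝ) ∈ Icc (b t₀) (b t) := ⟨hbt₀.le, h⟩
      obtain ⟨c, hc, hbc⟩ := intermediate_value_Icc' htr hcont'' h01
      have hcS : c ∈ S := ⟨⟨(ht₁0'.le.trans htl.le).trans hc.1, hc.2⟩, hbc⟩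
      have : c ≤ t₁ := le_csSup hScomp.bddAbove hcS
      linarith [hc.1]
    -- local max on [t₁, t₀] at t₁
    have hmax : IsLocalMaxOn b (Icc t₁ t₀) t₁ := by
      apply eventually_nhdsWithin_of_forall
      intro x hx
      rcases eq_or_lt_of_le hx.1 with h | h
      · rw [← h]
      · rw [hbt₁]; exact (hneg x ⟨h, hx.2⟩).le
    have ht₁Ioo : t₁ ∈ Ioo 0 T := ⟨ht₁0', lt_of_lt_of_le ht₁t₀' ht₀T⟩
    have hd : HasDerivAt b (deriv b t₁) t₁ := (hdiff t₁ ht₁Ioo).hasDerivAt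
    have htc : t₀ - t₁ ∈ posTangentConeAt (Icc t₁ t₀) t₁ := by
      apply sub_mem_posTangentConeAt_of_segment_subset
      rw [segment_eq_Icc ht₁t₀'.le]
    have hkey := hmax.hasFDerivWithinAt_nonpos hd.hasFDerivAt.hasFDerivWithinAt htc
    simp only [ContinuousLinearMap.smulRight_apply, ContinuousLinearMap.one_apply, ContinuousLinearMap.toSpanSingleton_apply,
      smul_eq_mul] at hkey
    have hderiv : deriv b t₁ ≤ 0 := by nlinarith [sub_pos.mpr ht₁t₀']
    exact ⟨t₁, ⟨ht₁0', ht₁t₀'⟩, hbt₁, hderiv⟩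
  refine ⟨main, ?_⟩
  intro γ hγ hcond t ht
  by_contra hlt
  push_neg at hlt
  have ht0 : 0 < t := by
    rcases ht.1.lt_or_eq with h | h
    · exact h
    · exfalso; rw [← h] at hlt; linarith
  obtain ⟨t₁, ⟨ht₁0, ht₁t⟩, hbt₁, hd⟩ := main t ⟨ht0, ht.2⟩ hlt
  have ht₁Ioo : t₁ ∈ Ioo 0 T := ⟨ht₁0, lt_of_lt_of_le ht₁t ht.2⟩
  have := hcond t₁ ht₁Ioo hbt₁
  rw [hbt₁] at this
  linarith
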